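/- Let c : ℕ × ℕ → ℂ be finitely supported and not identically zero, and set P(z) = Σ_{j,q} c_{j,q} z^j (conj z)^q for z ∈ ℂ. Let α be a nonzero real number and β ∈ ℂ, and suppose that P(exp(β·s)·z) = exp(α·s)·P(z) for all s ∈ ℝ and all z ∈ ℂ. Then there is a positive integer k such that α = k·Re β and P is homogeneous of degree k, i.e. c_{j,q} = 0 whenever j + q ≠ k. -/

import Mathlib

open Complex ComplexConjugate Finset

lemma aux_mono (n : ℕ) (b : ℕ → ℂ)
    (h : ∀ x : ℂ, ∑ j ∈ Finset.range n, b j * x ^ j = 0) :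
    ∀ j < n, b j = 0 := by
  intro j hj
  have hp : (∑ i ∈ Finset.range n, Polynomial.monomial i (b i)) = 0 := by
    apply Polynomial.funext
    intro x
    simpa [Polynomial.eval_finset_sum, Polynomial.eval_monomial, mul_comm] using h x
  have h2 := congrArg (fun p => Polynomial.coeff p j) hp
  simp [Polynomial.finset_sum_coeff, Polynomial.coeff_monomial] at h2
  exact h2 hj

lemma aux_indep (N : ℕ) (a : ℕ → ℕ → ℂ)
    (h : ∀ z : ℂ, ∑ j ∈ Finset.range (N+1), ∑ q ∈ Finset.range (N+1),
      a j q * z ^ j * (conj z) ^ q = 0) :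
    ∀ j q, j ≤ N → q ≤ N → a j q = 0 := by
  -- Step 1: for real y, complex x
  have h1 : ∀ (y : ℝ) (x : ℂ), ∑ j ∈ Finset.range (N+1), ∑ q ∈ Finset.range (N+1),
      a j q * (x + I * y) ^ j * (x - I * y) ^ q = 0 := by
    intro y
    set p : Polynomial ℂ := ∑ j ∈ Finset.range (N+1), ∑ q ∈ Finset.range (N+1),
      Polynomial.C (a j q) * (Polynomial.X + Polynomial.C (I * y)) ^ j *
        (Polynomial.X - Polynomial.C (I * y)) ^ q with hpdef
    have hev : ∀ x : ℂ, p.eval x = ∑ j ∈ Finset.range (N+1), ∑ q ∈ Finset.range (N+1),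
        a j q * (x + I * y) ^ j * (x - I * y) ^ q := by
      intro x
      simp [hpdef, Polynomial.eval_finset_sum]
    have hp0 : p = 0 := by
      apply Polynomial.eq_zero_of_infinite_isRoot
      apply Set.Infinite.mono (s := Set.range (Complex.ofReal))
      · rintro _ ⟨x, rfl⟩
        have := h (x + I * y)
        have hc : conj ((x : ℂ) + I * y) = (x : ℂ) - I * y := by
          simp [Complex.conj_ofReal]
          ring
        rw [hc] at this
        simpa [Polynomial.IsRoot, hev] using this
      · exact Set.infinite_range_of_injective Complex.ofReal_injective
    intro x
    rw [← hev x, hp0, Polynomial.eval_zero]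
  -- Step 2: for complex y
  have h2 : ∀ (x y : ℂ), ∑ j ∈ Finset.range (N+1), ∑ q ∈ Finset.range (N+1),
      a j q * (x + I * y) ^ j * (x - I * y) ^ q = 0 := by
    intro x
    set p : Polynomial ℂ := ∑ j ∈ Finset.range (N+1), ∑ q ∈ Finset.range (N+1),
      Polynomial.C (a j q) * (Polynomial.C x + Polynomial.C I * Polynomial.X) ^ j *
        (Polynomial.C x - Polynomial.C I * Polynomial.X) ^ q with hpdef
    have hev : ∀ y : ℂ, p.eval y = ∑ j ∈ Finset.range (N+1), ∑ q ∈ Finset.range (N+1),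
        a j q * (x + I * y) ^ j * (x - I * y) ^ q := by
      intro y
      simp [hpdef, Polynomial.eval_finset_sum]
    have hp0 : p = 0 := by
      apply Polynomial.eq_zero_of_infinite_isRoot
      apply Set.Infinite.mono (s := Set.range (Complex.ofReal))
      · rintro _ ⟨y, rfl⟩
        simpa [Polynomial.IsRoot, hev] using h1 y x
      · exact Set.infinite_range_of_injective Complex.ofReal_injective
    intro y
    rw [← hev y, hp0, Polynomial.eval_zero]
  -- Step 3: F z w = 0 for all z w
  have hF : ∀ z w : ℂ, ∑ j ∈ Finset.range (N+1), ∑ q ∈ Finset.range (N+1),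
      a j q * z ^ j * w ^ q = 0 := by
    intro z w
    have := h2 ((z + w) / 2) ((z - w) * (-I) / 2)
    have e1 : (z + w) / 2 + I * ((z - w) * (-I) / 2) = z := by
      have := Complex.I_mul_I
      linear_combination (-(z - w) / 2) * this
    have e2 : (z + w) / 2 - I * ((z - w) * (-I) / 2) = w := by
      have := Complex.I_mul_I
      linear_combination ((z - w) / 2) * this
    rwa [e1, e2] at this
  -- Step 4: peel off coefficients
  intro j q hj hq
  have hrow : ∀ w : ℂ, ∑ q' ∈ Finset.range (N+1), a j q' * w ^ q' = 0 := by
    intro w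
    have hz : ∀ z : ℂ, ∑ j' ∈ Finset.range (N+1),
        (∑ q' ∈ Finset.range (N+1), a j' q' * w ^ q') * z ^ j' = 0 := by
      intro z
      have := hF z w
      rw [← this]
      rw [Finset.sum_congr rfl]
      intro j' _
      rw [Finset.sum_mul]
      exact Finset.sum_congr rfl fun q' _ => by ring
    exact aux_mono (N+1) _ hz j (by omega)
  exact aux_mono (N+1) (a j) hrow q (by omega)
/-- if `P(z) = Σ c_{j,q} z^j conj(z)^q` is a nonzero polynomial in `z` and
`conj z`, `α ≠ 0` is real, `β ∈ ℂ`, and `P(e^{βs} z) = e^{αs} P(z)` for all real `s` and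
all `z`, then `α = k Re β` for some `k ≥ 1` and `P` is homogeneous of degree `k`. -/
theorem stmt13 (c : ℕ → ℕ → ℂ) (N : ℕ)
    (hsupp : ∀ j q, N < j ∨ N < q → c j q = 0)
    (hne : ∃ j q, c j q ≠ 0)
    (P : ℂ → ℂ)
    (hP : ∀ z : ℂ, P z = ∑ j ∈ Finset.range (N + 1), ∑ q ∈ Finset.range (N + 1),
      c j q * z ^ j * (conj z) ^ q)
    (α : ℝ) (hα : α ≠ 0) (β : ℂ)
    (heq : ∀ s : ℝ, ∀ z : ℂ,
      P (Complex.exp (β * s) * z) = (Real.exp (α * s) : ℂ) * P z) :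
    ∃ k : ℕ, 0 < k ∧ α = k * β.re ∧ ∀ j q : ℕ, j + q ≠ k → c j q = 0 := by
  -- the coefficient identity at s = 1
  have hz : ∀ z : ℂ, ∑ j ∈ Finset.range (N+1), ∑ q ∈ Finset.range (N+1),
      (c j q * (Complex.exp β ^ j * Complex.exp (conj β) ^ q - Real.exp α)) * z ^ j
        * (conj z) ^ q = 0 := by
    intro z
    have h1 := heq 1 z
    rw [hP, hP] at h1
    simp only [Complex.ofReal_one, mul_one] at h1
    have hconj : ∀ q : ℕ, (conj (Complex.exp β * z)) ^ q
        = Complex.exp (conj β) ^ q * (conj z) ^ q := by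
      intro q
      rw [map_mul, Complex.exp_conj, mul_pow]
    calc ∑ j ∈ Finset.range (N+1), ∑ q ∈ Finset.range (N+1),
          (c j q * (Complex.exp β ^ j * Complex.exp (conj β) ^ q - Real.exp α)) * z ^ j
            * (conj z) ^ q
        = (∑ j ∈ Finset.range (N+1), ∑ q ∈ Finset.range (N+1),
            c j q * (Complex.exp β * z) ^ j * (conj (Complex.exp β * z)) ^ q)
          - (Real.exp α : ℂ) * ∑ j ∈ Finset.range (N+1), ∑ q ∈ Finset.range (N+1),
            c j q * z ^ j * (conj z) ^ q := by
          rw [Finset.mul_sum, ← Finset.sum_sub_distrib]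
          refine Finset.sum_congr rfl fun j _ => ?_
          rw [Finset.mul_sum, ← Finset.sum_sub_distrib]
          refine Finset.sum_congr rfl fun q _ => ?_
          rw [hconj q, mul_pow]
          ring
      _ = 0 := by rw [h1]; ring
  have hkey : ∀ j q : ℕ, c j q ≠ 0 → ((j : ℝ) + q) * β.re = α := by
    intro j q hc
    have hjN : j ≤ N := by by_contra h; exact hc (hsupp j q (Or.inl (by omega)))
    have hqN : q ≤ N := by by_contra h; exact hc (hsupp j q (Or.inr (by omega)))
    have h0 := aux_indep N _ hz j q hjN hqN
    have hexp : Complex.exp β ^ j * Complex.exp (conj β) ^ q = (Real.exp α : ℂ) :=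
      sub_eq_zero.mp ((mul_eq_zero.mp h0).resolve_left hc)
    have habs : ‖Complex.exp β ^ j * Complex.exp (conj β) ^ q‖ = ‖(Real.exp α : ℂ)‖ := by
      rw [hexp]
    rw [norm_mul, norm_pow, norm_pow, Complex.norm_exp, Complex.norm_exp] at habs
    rw [Complex.norm_real, Real.norm_eq_abs, abs_of_pos (Real.exp_pos α)] at habs
    rw [Complex.conj_re] at habs
    rw [← Real.exp_nat_mul, ← Real.exp_nat_mul, ← Real.exp_add] at habs
    have := Real.exp_injective habs
    linarith [this]
  obtain ⟨j0, q0, hc0⟩ := hne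
  refine ⟨j0 + q0, ?_, ?_, ?_⟩
  · by_contra h
    have hk0 : j0 + q0 = 0 := by omega
    have h2 := hkey j0 q0 hc0
    have h3 : ((j0 : ℝ) + q0) = 0 := by exact_mod_cast hk0
    rw [h3, zero_mul] at h2
    exact hα h2.symm
  · have := hkey j0 q0 hc0
    push_cast at this ⊢
    linarith
  · intro j q hjq
    by_contra hc
    have h1 := hkey j q hc
    have h2 := hkey j0 q0 hc0
    have hb : β.re ≠ 0 := by
      intro h
      rw [h, mul_zero] at h2
      exact hα h2.symm
    have : (j : ℝ) + q = (j0 : ℝ) + q0 := by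
      have := h1.trans h2.symm
      exact mul_right_cancel₀ hb this
    have : j + q = j0 + q0 := by exact_mod_cast this
    exact hjq this
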